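/- Let b, d > 0 and C_FN, C_FP > 0, and let W₊, W₋ ≥ 0. Define g(α) = 2b·C_FN·cosh(C_FN·α) + 2d·C_FP·cosh(C_FP·α) − C_FN·e^{−C_FN·α}·W₊ − C_FP·e^{−C_FP·α}·W₋. If W₊ > 2b and W₋ > 2d, then g(0) < 0 and g(α) → +∞ as α → +∞; hence by continuity there exists α > 0 with g(α) = 0. -/

import Mathlib

theorem csab_alpha_exists
    (b d CFN CFP Wp Wm : ℝ)
    (hb : 0 < b) (hd : 0 < d) (hFN : 0 < CFN) (hFP : 0 < CFP)
    (hWp : 0 ≤ Wp) (hWm : 0 ≤ Wm)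
    (g : ℝ → ℝ)
    (hg : g = fun α => 2 * b * CFN * Real.cosh (CFN * α)
        + 2 * d * CFP * Real.cosh (CFP * α)
        - CFN * Real.exp (-(CFN * α)) * Wp
        - CFP * Real.exp (-(CFP * α)) * Wm)
    (h1 : Wp > 2 * b) (h2 : Wm > 2 * d) :
    g 0 < 0 ∧ Filter.Tendsto g Filter.atTop Filter.atTop ∧
    ∃ α : ℝ, 0 < α ∧ g α = 0 := by
  have hg0 : g 0 < 0 := by
    simp only [hg, mul_zero, Real.cosh_zero, neg_zero, Real.exp_zero]
    nlinarith
  have hcont : Continuous g := by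
    subst hg; continuity
  have htop : Filter.Tendsto g Filter.atTop Filter.atTop := by
    subst hg
    have hA : Filter.Tendsto (fun α : ℝ => 2 * b * CFN * Real.cosh (CFN * α))
        Filter.atTop Filter.atTop := by
      have hexp : Filter.Tendsto (fun α : ℝ => Real.exp (CFN * α)) Filter.atTop
          Filter.atTop :=
        (Real.tendsto_exp_atTop).comp (Filter.tendsto_atTop_atTop_of_monotone
          (fun x y hxy => by nlinarith) (fun z => ⟨z / CFN, by field_simp; exact le_refl z⟩))
      have hcosh : Filter.Tendsto (fun α : ℝ => Real.cosh (CFN * α)) Filter.atTop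
          Filter.atTop := by
        apply Filter.tendsto_atTop_mono (fun α => ?_)
          (hexp.atTop_div_const (by norm_num : (0:ℝ) < 2))
        rw [Real.cosh_eq]
        have := Real.exp_pos (-(CFN * α))
        linarith
      exact hcosh.const_mul_atTop (by positivity)
    have hB : ∀ α : ℝ, 0 ≤ 2 * d * CFP * Real.cosh (CFP * α) := fun α => by
      have := Real.cosh_pos (x := CFP * α); positivity
    have hC : Filter.Tendsto (fun α : ℝ => CFN * Real.exp (-(CFN * α)) * Wp)
        Filter.atTop (nhds 0) := by
      have : Filter.Tendsto (fun α : ℝ => Real.exp (-(CFN * α))) Filter.atTop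
          (nhds 0) := by
        apply Real.tendsto_exp_atBot.comp
        apply Filter.tendsto_neg_atBot_iff.mpr
        exact Filter.tendsto_atTop_atTop_of_monotone (fun x y hxy => by nlinarith)
          (fun z => ⟨z / CFN, by field_simp; exact le_refl z⟩)
      simpa using (this.const_mul CFN).mul_const Wp
    have hD : Filter.Tendsto (fun α : ℝ => CFP * Real.exp (-(CFP * α)) * Wm)
        Filter.atTop (nhds 0) := by
      have : Filter.Tendsto (fun α : ℝ => Real.exp (-(CFP * α))) Filter.atTop
          (nhds 0) := by
        apply Real.tendsto_exp_atBot.comp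
        apply Filter.tendsto_neg_atBot_iff.mpr
        exact Filter.tendsto_atTop_atTop_of_monotone (fun x y hxy => by nlinarith)
          (fun z => ⟨z / CFP, by field_simp; exact le_refl z⟩)
      simpa using (this.const_mul CFP).mul_const Wm
    have h1' : Filter.Tendsto (fun α : ℝ => 2 * b * CFN * Real.cosh (CFN * α)
        + 2 * d * CFP * Real.cosh (CFP * α)) Filter.atTop Filter.atTop :=
      Filter.tendsto_atTop_mono (fun α => le_add_of_nonneg_right (hB α)) hA
    have h3' : Filter.Tendsto (fun α : ℝ => (2 * b * CFN * Real.cosh (CFN * α)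
        + 2 * d * CFP * Real.cosh (CFP * α)) - CFN * Real.exp (-(CFN * α)) * Wp
        - CFP * Real.exp (-(CFP * α)) * Wm) Filter.atTop Filter.atTop := by
      have := Filter.tendsto_atTop_add_right_of_le' (C := -1)
        (l := Filter.atTop) (f := fun α : ℝ => 2 * b * CFN * Real.cosh (CFN * α)
          + 2 * d * CFP * Real.cosh (CFP * α))
        (g := fun α : ℝ => -(CFN * Real.exp (-(CFN * α)) * Wp)
          - CFP * Real.exp (-(CFP * α)) * Wm) h1' ?_
      · exact this.congr (fun α => by ring)
      · have hCD := hC.add hD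
        rw [show (0:ℝ) + 0 = 0 by ring] at hCD
        filter_upwards [Filter.Tendsto.eventually_le_const (by norm_num : (0:ℝ) < 1) hCD]
          with α hα
        linarith
    exact h3'
  refine ⟨hg0, htop, ?_⟩
  obtain ⟨M, hM, hM1⟩ :=
    ((htop.eventually_ge_atTop 1).and (Filter.eventually_ge_atTop (1:ℝ))).exists
  have hM0 : (0:ℝ) ≤ M := by linarith
  have h0mem : (0:ℝ) ∈ Set.Icc (g 0) (g M) := ⟨le_of_lt hg0, by linarith⟩
  obtain ⟨α, hαmem, hαeq⟩ := intermediate_value_Icc hM0 hcont.continuousOn h0mem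
  refine ⟨α, ?_, hαeq⟩
  rcases lt_or_eq_of_le hαmem.1 with h | h
  · exact h
  · exfalso; rw [← h] at hαeq; linarith
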